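/- Let x, y, z ∈ ℂ with |x| < 1, |y| < 1, |z| < 1, x ≠ 1 and y ≠ 1. Then the infinite product over all triples of positive integers (l,m,n) with l ≤ n, m ≤ n and gcd(l,m,n) = 1 of (1/(1 − x^l y^m z^n))^(1/n) equals ( (1 − xz)(1 − yz) / ((1 − z)(1 − xyz)) )^( xy/((1 − x)(1 − y)) ). -/

import Mathlib

open Complex Real


private lemma re_aux {u w : ℂ} (hu : ‖u‖ < 1) (hw : ‖w‖ < 1) :
    0 < ((1 - (starRingEnd ℂ) u) * (1 - u * w) * (1 - (starRingEnd ℂ) w)).re := by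
  have h1 : u.re ^ 2 + u.im ^ 2 < 1 := by
    have := Complex.sq_norm u
    have h := hu
    nlinarith [norm_nonneg u, Complex.normSq_apply u]
  have h2 : w.re ^ 2 + w.im ^ 2 < 1 := by
    have := Complex.sq_norm w
    have h := hw
    nlinarith [norm_nonneg w, Complex.normSq_apply w]
  have ha1 : u.re < 1 := by nlinarith [sq_nonneg u.im]
  have hc1 : w.re < 1 := by nlinarith [sq_nonneg w.im]
  simp only [Complex.mul_re, Complex.mul_im, Complex.sub_re, Complex.sub_im, Complex.one_re,
    Complex.one_im, Complex.conj_re, Complex.conj_im]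
  nlinarith [mul_pos (mul_pos (sub_pos.2 ha1) (sub_pos.2 ha1))
      (sub_pos.2 (show w.re ^ 2 + w.im ^ 2 < 1 from h2)),
    mul_nonneg (mul_nonneg (sub_nonneg.2 hc1.le) (sub_nonneg.2 hc1.le))
      (sub_nonneg.2 h1.le),
    mul_nonneg (sq_nonneg u.im) (sub_nonneg.2 h2.le),
    mul_nonneg (sq_nonneg w.im) (sub_nonneg.2 h1.le)]


private lemma arg_helper {a b c : ℂ} (ha : 0 < a.re) (hb : 0 < b.re) (hc : 0 < c.re)
    (h : 0 < (a * b * (starRingEnd ℂ) c).re) :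
    |a.arg + b.arg - c.arg| < π / 2 := by
  have ha0 : a ≠ 0 := fun h0 => by simp [h0] at ha
  have hb0 : b ≠ 0 := fun h0 => by simp [h0] at hb
  have hc0 : c ≠ 0 := fun h0 => by simp [h0] at hc
  have hc0' : (starRingEnd ℂ) c ≠ 0 := by simpa using hc0
  have hA : |(a * b * (starRingEnd ℂ) c).arg| < π / 2 :=
    Complex.abs_arg_lt_pi_div_two_iff.mpr (Or.inl h)
  have haa : |a.arg| < π / 2 := Complex.abs_arg_lt_pi_div_two_iff.mpr (Or.inl ha)
  have hba : |b.arg| < π / 2 := Complex.abs_arg_lt_pi_div_two_iff.mpr (Or.inl hb)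
  have hca : |c.arg| < π / 2 := Complex.abs_arg_lt_pi_div_two_iff.mpr (Or.inl hc)
  have hangle : ((a * b * (starRingEnd ℂ) c).arg : Real.Angle) =
      ((a.arg + b.arg - c.arg : ℝ) : Real.Angle) := by
    rw [Complex.arg_mul_coe_angle (mul_ne_zero ha0 hb0) hc0',
      Complex.arg_mul_coe_angle ha0 hb0, Complex.arg_conj_coe_angle]
    push_cast
    rw [Real.Angle.coe_sub, Real.Angle.coe_add]
    abel
  obtain ⟨k, hk⟩ := Real.Angle.angle_eq_iff_two_pi_dvd_sub.mp hangle
  have hpi : 0 < π := Real.pi_pos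
  have hk0 : k = 0 := by
    rcases lt_trichotomy k 0 with hlt | heq | hgt
    · have hk1 : k ≤ -1 := by omega
      have : (k : ℝ) ≤ -1 := by exact_mod_cast hk1
      rw [abs_lt] at hA haa hba hca
      nlinarith
    · exact heq
    · have : (1 : ℝ) ≤ (k : ℝ) := by exact_mod_cast hgt
      rw [abs_lt] at hA haa hba hca
      nlinarith
  rw [hk0] at hk
  simp at hk
  rw [abs_lt] at hA haa hba hca ⊢
  constructor <;> nlinarith [hk]


private lemma one_sub_re_pos {w : ℂ} (hw : ‖w‖ < 1) : 0 < (1 - w).re := by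
  have h1 : w.re ≤ ‖w‖ := Complex.re_le_norm w
  have h2 : w.re < 1 := lt_of_le_of_lt h1 hw
  simp only [Complex.sub_re, Complex.one_re]
  linarith

private lemma one_sub_ne_zero' {w : ℂ} (hw : ‖w‖ < 1) : (1 : ℂ) - w ≠ 0 := by
  intro h0
  have := one_sub_re_pos hw
  rw [h0] at this
  simp at this

private lemma norm_mul_lt_one {a b : ℂ} (ha : ‖a‖ < 1) (hb : ‖b‖ < 1) : ‖a * b‖ < 1 := by
  rw [norm_mul]
  calc ‖a‖ * ‖b‖ ≤ 1 * ‖b‖ := by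
        apply mul_le_mul_of_nonneg_right ha.le (norm_nonneg b)
    _ = ‖b‖ := one_mul _
    _ < 1 := hb

private lemma log_base {x y z : ℂ} (hx : ‖x‖ < 1) (hy : ‖y‖ < 1) (hz : ‖z‖ < 1) :
    Complex.log ((1 - x*z) * (1 - y*z) / ((1 - z) * (1 - x*y*z))) =
      Complex.log (1 - x*z) + Complex.log (1 - y*z)
        - Complex.log (1 - z) - Complex.log (1 - x*y*z) := by
  have hxz : ‖x*z‖ < 1 := norm_mul_lt_one hx hz
  have hyz : ‖y*z‖ < 1 := norm_mul_lt_one hy hz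
  have hxyz : ‖x*y*z‖ < 1 := norm_mul_lt_one (norm_mul_lt_one hx hy) hz
  have hrw1 : 0 < (1 - x*z).re := one_sub_re_pos hxz
  have hrq1 : 0 < (1 - y*z).re := one_sub_re_pos hyz
  have hrq2 : 0 < (1 - z).re := one_sub_re_pos hz
  have hrw2 : 0 < (1 - x*y*z).re := one_sub_re_pos hxyz
  have hry : 0 < (1 - y).re := one_sub_re_pos hy
  have hrcy : 0 < (1 - (starRingEnd ℂ) y).re := by
    simpa [Complex.sub_re, Complex.conj_re] using hry
  -- s1 : |arg(1-y) + arg(1-xz) - arg(1-xyz)| < π / 2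
  have hprod1 : 0 < ((1 - y) * (1 - x*z) * (starRingEnd ℂ) (1 - x*y*z)).re := by
    have h := re_aux (u := y) (w := x*z) hy hxz
    have heq : (1 - y) * (1 - x*z) * (starRingEnd ℂ) (1 - x*y*z) =
        (starRingEnd ℂ) ((1 - (starRingEnd ℂ) y) * (1 - y * (x*z)) * (1 - (starRingEnd ℂ) (x*z))) := by
      simp only [map_mul, map_sub, map_one, Complex.conj_conj]
      ring
    rw [heq, Complex.conj_re]
    have heq2 : (1 - (starRingEnd ℂ) y) * (1 - y * (x*z)) * (1 - (starRingEnd ℂ) (x*z)) =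
        (1 - (starRingEnd ℂ) y) * (1 - x*y*z) * (1 - (starRingEnd ℂ) (x*z)) := by ring
    rw [heq2] at h
    convert h using 4 <;> ring
  have hs1 : |(1 - y).arg + (1 - x*z).arg - (1 - x*y*z).arg| < π / 2 :=
    arg_helper hry hrw1 hrw2 hprod1
  -- s2 : |arg(1-conj y) + arg(1-yz) - arg(1-z)| < π / 2
  have hprod2 : 0 < ((1 - (starRingEnd ℂ) y) * (1 - y*z) * (starRingEnd ℂ) (1 - z)).re := by
    have h := re_aux (u := y) (w := z) hy hz
    simpa only [map_sub, map_one] using h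
  have hs2 : |(1 - (starRingEnd ℂ) y).arg + (1 - y*z).arg - (1 - z).arg| < π / 2 :=
    arg_helper hrcy hrq1 hrq2 hprod2
  have hconjarg : (1 - (starRingEnd ℂ) y).arg = -(1 - y).arg := by
    have h1 : (1 : ℂ) - (starRingEnd ℂ) y = (starRingEnd ℂ) (1 - y) := by
      simp only [map_sub, map_one]
    rw [h1, Complex.arg_conj]
    rw [if_neg]
    intro hpi
    have := Complex.abs_arg_lt_pi_div_two_iff.mpr (Or.inl hry)
    rw [hpi] at this
    rw [abs_of_pos Real.pi_pos] at this
    linarith [Real.pi_pos]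
  rw [hconjarg] at hs2
  -- the imaginary part of the sum
  set F0 : ℂ := Complex.log (1 - x*z) + Complex.log (1 - y*z)
      - Complex.log (1 - z) - Complex.log (1 - x*y*z) with hF0
  have hIm : F0.im = (1 - x*z).arg + (1 - y*z).arg - (1 - z).arg - (1 - x*y*z).arg := by
    simp [hF0, Complex.sub_im, Complex.add_im, Complex.log_im]
  have hImbound : |F0.im| < π := by
    rw [hIm]
    rw [abs_lt] at hs1 hs2 ⊢
    constructor <;> [linarith [hs1.1, hs2.1]; linarith [hs1.2, hs2.2]]
  -- exp F0 = base
  have hne1 : (1 : ℂ) - x*z ≠ 0 := one_sub_ne_zero' hxz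
  have hne2 : (1 : ℂ) - y*z ≠ 0 := one_sub_ne_zero' hyz
  have hne3 : (1 : ℂ) - z ≠ 0 := one_sub_ne_zero' hz
  have hne4 : (1 : ℂ) - x*y*z ≠ 0 := one_sub_ne_zero' hxyz
  have hexp : Complex.exp F0 = (1 - x*z) * (1 - y*z) / ((1 - z) * (1 - x*y*z)) := by
    rw [hF0, Complex.exp_sub, Complex.exp_sub, Complex.exp_add]
    rw [Complex.exp_log hne1, Complex.exp_log hne2, Complex.exp_log hne3, Complex.exp_log hne4]
    field_simp
  rw [← hexp, Complex.log_exp (by linarith [abs_lt.mp hImbound]) (by linarith [abs_lt.mp hImbound])]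


variable {x y z : ℂ}

private lemma norm_mul_lt_one' {a b : ℂ} (ha : ‖a‖ < 1) (hb : ‖b‖ < 1) : ‖a * b‖ < 1 := by
  rw [norm_mul]
  calc ‖a‖ * ‖b‖ ≤ 1 * ‖b‖ := mul_le_mul_of_nonneg_right ha.le (norm_nonneg b)
    _ = ‖b‖ := one_mul _
    _ < 1 := hb

private lemma hasSum_F0 (hx : ‖x‖ < 1) (hy : ‖y‖ < 1) (hz : ‖z‖ < 1) :
    HasSum (fun n : ℕ => (1 - x^n) * (1 - y^n) * (z^n / n))
      (Complex.log (1 - x*z) + Complex.log (1 - y*z)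
        - Complex.log (1 - z) - Complex.log (1 - x*y*z)) := by
  have h1 := hasSum_taylorSeries_neg_log hz
  have h2 := hasSum_taylorSeries_neg_log (norm_mul_lt_one' hx hz)
  have h3 := hasSum_taylorSeries_neg_log (norm_mul_lt_one' hy hz)
  have h4 := hasSum_taylorSeries_neg_log (norm_mul_lt_one' (norm_mul_lt_one' hx hy) hz)
  have h := ((h1.sub h2).sub h3).add h4
  have hfun : (fun n : ℕ => (1 - x^n) * (1 - y^n) * (z^n / (n : ℂ))) =
      (fun b : ℕ => z^b / b - (x*z)^b / b - (y*z)^b / b + (x*y*z)^b / b) := by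
    funext n
    rw [div_sub_div_same, div_sub_div_same, ← add_div, mul_div_assoc']
    congr 1
    rw [mul_pow, mul_pow, mul_pow]
    ring

  have hval : -Complex.log (1 - z) - -Complex.log (1 - x*z) - -Complex.log (1 - y*z)
      + -Complex.log (1 - x*y*z) = Complex.log (1 - x*z) + Complex.log (1 - y*z)
        - Complex.log (1 - z) - Complex.log (1 - x*y*z) := by ring
  rw [hfun, ← hval]
  exact h

private lemma innerSumAux3 (hx1 : x ≠ 1) (hy1 : y ≠ 1) (n : ℕ) :
    ∑ ij : Fin n × Fin n, x^((ij.1 : ℕ)+1) * y^((ij.2 : ℕ)+1) * (z^n / n) =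
      x * y / ((1-x) * (1-y)) * ((1 - x^n) * (1 - y^n) * (z^n / n)) := by
  have hxs : ∑ i : Fin n, x^((i : ℕ)+1) = x * ((x^n - 1)/(x - 1)) := by
    rw [Fin.sum_univ_eq_sum_range (fun i => x^(i+1))]
    rw [← geom_sum_eq hx1 n, Finset.mul_sum]
    apply Finset.sum_congr rfl
    intro i _
    rw [pow_succ]
    ring
  have hys : ∑ j : Fin n, y^((j : ℕ)+1) = y * ((y^n - 1)/(y - 1)) := by
    rw [Fin.sum_univ_eq_sum_range (fun j => y^(j+1))]
    rw [← geom_sum_eq hy1 n, Finset.mul_sum]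
    apply Finset.sum_congr rfl
    intro j _
    rw [pow_succ]
    ring
  have key : ∑ ij : Fin n × Fin n, x^((ij.1 : ℕ)+1) * y^((ij.2 : ℕ)+1) * (z^n / n) =
      (∑ i : Fin n, x^((i : ℕ)+1)) * (∑ j : Fin n, y^((j : ℕ)+1)) * (z^n / n) := by
    rw [Finset.sum_mul_sum, Finset.sum_mul]
    rw [Fintype.sum_prod_type]
    apply Finset.sum_congr rfl
    intro i _
    rw [Finset.sum_mul]
  rw [key, hxs, hys]
  have hx0 : x - 1 ≠ 0 := sub_ne_zero.mpr hx1
  have hy0 : y - 1 ≠ 0 := sub_ne_zero.mpr hy1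
  field_simp
  ring


private noncomputable def GfunAux (x y z : ℂ) : (Σ _n : ℕ, (Fin _n × Fin _n)) → ℂ :=
  fun s => x ^ ((s.2.1 : ℕ) + 1) * y ^ ((s.2.2 : ℕ) + 1) * (z ^ (s.1) / (s.1 : ℂ))

private lemma summable_norm_GAux {x y z : ℂ} (hx : ‖x‖ < 1) (hy : ‖y‖ < 1) (hz : ‖z‖ < 1) :
    Summable fun s => ‖GfunAux x y z s‖ := by
  rw [summable_sigma_of_nonneg (fun _ => norm_nonneg _)]
  refine ⟨fun n => Summable.of_finite, ?_⟩
  have hgs : Summable (fun n : ℕ => (n : ℝ)^2 * ‖z‖^n) := by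
    have : ‖‖z‖‖ < 1 := by rwa [Real.norm_eq_abs, _root_.abs_of_nonneg (norm_nonneg z)]
    simpa using summable_pow_mul_geometric_of_norm_lt_one 2 this
  refine Summable.of_nonneg_of_le
    (fun n => tsum_nonneg fun _ => norm_nonneg _) (fun n => ?_) hgs
  ·
    rw [tsum_fintype]
    have hbound : ∀ ij : Fin n × Fin n, ‖GfunAux x y z ⟨n, ij⟩‖ ≤ ‖z‖^n := by
      rintro ⟨i, j⟩
      have hn : 1 ≤ n := i.pos
      simp only [GfunAux, norm_mul, norm_div, norm_pow]
      have h1 : ‖x‖^((i : ℕ)+1) ≤ 1 := pow_le_one₀ (norm_nonneg x) hx.le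
      have h2 : ‖y‖^((j : ℕ)+1) ≤ 1 := pow_le_one₀ (norm_nonneg y) hy.le
      have h3 : ‖z‖^n / ‖(n : ℂ)‖ ≤ ‖z‖^n := by
        have h1n : (1:ℝ) ≤ ‖(n : ℂ)‖ := by
          rw [Complex.norm_natCast]
          exact_mod_cast hn
        exact div_le_self (pow_nonneg (norm_nonneg z) n) h1n
      calc ‖x‖^((i : ℕ)+1) * ‖y‖^((j : ℕ)+1) * (‖z‖^n / ‖(n:ℂ)‖) ≤
            1 * 1 * (‖z‖^n / ‖(n:ℂ)‖) := by
            apply mul_le_mul (mul_le_mul h1 h2 (by positivity) zero_le_one) le_rfl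
              (by positivity) (by norm_num)
        _ = ‖z‖^n / ‖(n:ℂ)‖ := by ring
        _ ≤ ‖z‖^n := h3
    calc ∑ ij : Fin n × Fin n, ‖GfunAux x y z ⟨n, ij⟩‖ ≤
          ∑ _ij : Fin n × Fin n, ‖z‖^n := Finset.sum_le_sum fun ij _ => hbound ij
      _ = (n * n : ℕ) * ‖z‖^n := by
          rw [Finset.sum_const, Finset.card_univ]
          simp [Fintype.card_prod, nsmul_eq_mul]
      _ ≤ (n : ℝ)^2 * ‖z‖^n := by
          apply mul_le_mul_of_nonneg_right _ (pow_nonneg (norm_nonneg z) n)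
          push_cast
          nlinarith [Nat.cast_nonneg (α := ℝ) n]


private lemma gcd_div_div {d a b : ℕ} (hd : 0 < d) (ha : d ∣ a) (hb : d ∣ b) :
    Nat.gcd (a / d) (b / d) = Nat.gcd a b / d := by
  obtain ⟨a', rfl⟩ := ha
  obtain ⟨b', rfl⟩ := hb
  rw [Nat.mul_div_cancel_left _ hd, Nat.mul_div_cancel_left _ hd, Nat.gcd_mul_left,
    Nat.mul_div_cancel_left _ hd]

private def TEquiv1 : (Σ _n : ℕ, (Fin _n × Fin _n)) ≃
    {p : ℕ × ℕ × ℕ // 0 < p.1 ∧ 0 < p.2.1 ∧ 0 < p.2.2 ∧ p.1 ≤ p.2.2 ∧ p.2.1 ≤ p.2.2} where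
  toFun s := ⟨((s.2.1 : ℕ) + 1, (s.2.2 : ℕ) + 1, s.1),
    Nat.succ_pos _, Nat.succ_pos _, lt_of_le_of_lt (Nat.zero_le _) s.2.1.isLt,
    s.2.1.isLt, s.2.2.isLt⟩
  invFun t := ⟨t.1.2.2, ⟨⟨t.1.1 - 1, by omega⟩, ⟨t.1.2.1 - 1, by omega⟩⟩⟩
  left_inv s := rfl
  right_inv t := by
    obtain ⟨⟨l, m, n⟩, h1, h2, h3, h4, h5⟩ := t
    simp only [Prod.mk.injEq] at h1 h2 h3 h4 h5 ⊢
    apply Subtype.ext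
    dsimp
    simp only [Prod.mk.injEq]
    refine ⟨by omega, by omega, trivial⟩

private def TEquiv2 : ({p : ℕ × ℕ × ℕ // 0 < p.1 ∧ 0 < p.2.1 ∧ 0 < p.2.2 ∧
      p.1 ≤ p.2.2 ∧ p.2.1 ≤ p.2.2 ∧ Nat.gcd p.1 (Nat.gcd p.2.1 p.2.2) = 1} × ℕ) ≃
    {p : ℕ × ℕ × ℕ // 0 < p.1 ∧ 0 < p.2.1 ∧ 0 < p.2.2 ∧ p.1 ≤ p.2.2 ∧ p.2.1 ≤ p.2.2} where
  toFun q := ⟨((q.2 + 1) * q.1.1.1, (q.2 + 1) * q.1.1.2.1, (q.2 + 1) * q.1.1.2.2),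
    Nat.mul_pos (Nat.succ_pos _) q.1.2.1,
    Nat.mul_pos (Nat.succ_pos _) q.1.2.2.1,
    Nat.mul_pos (Nat.succ_pos _) q.1.2.2.2.1,
    Nat.mul_le_mul_left _ q.1.2.2.2.2.1,
    Nat.mul_le_mul_left _ q.1.2.2.2.2.2.1⟩
  invFun t :=
    let g := Nat.gcd t.1.1 (Nat.gcd t.1.2.1 t.1.2.2)
    have hg : 0 < g := Nat.gcd_pos_of_pos_left _ t.2.1
    have hdL : g ∣ t.1.1 := Nat.gcd_dvd_left _ _
    have hdMN : g ∣ Nat.gcd t.1.2.1 t.1.2.2 := Nat.gcd_dvd_right _ _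
    have hdM : g ∣ t.1.2.1 := hdMN.trans (Nat.gcd_dvd_left _ _)
    have hdN : g ∣ t.1.2.2 := hdMN.trans (Nat.gcd_dvd_right _ _)
    (⟨(t.1.1 / g, t.1.2.1 / g, t.1.2.2 / g),
      Nat.div_pos (Nat.le_of_dvd t.2.1 hdL) hg,
      Nat.div_pos (Nat.le_of_dvd t.2.2.1 hdM) hg,
      Nat.div_pos (Nat.le_of_dvd t.2.2.2.1 hdN) hg,
      Nat.div_le_div_right t.2.2.2.2.1,
      Nat.div_le_div_right t.2.2.2.2.2,
      by
        rw [gcd_div_div hg hdM hdN, gcd_div_div hg hdL hdMN]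
        exact Nat.div_self hg⟩, g - 1)
  left_inv q := by
    obtain ⟨⟨⟨l, m, n⟩, h1, h2, h3, h4, h5, h6⟩, k⟩ := q
    have hgcd : Nat.gcd ((k+1)*l) (Nat.gcd ((k+1)*m) ((k+1)*n)) = k + 1 := by
      rw [Nat.gcd_mul_left, Nat.gcd_mul_left, h6, mul_one]
    simp only [Prod.mk.injEq, Subtype.mk.injEq]
    refine ⟨⟨?_, ?_, ?_⟩, ?_⟩ <;> simp only [hgcd]
    · exact Nat.mul_div_cancel_left _ (Nat.succ_pos _)
    · exact Nat.mul_div_cancel_left _ (Nat.succ_pos _)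
    · exact Nat.mul_div_cancel_left _ (Nat.succ_pos _)
    · omega
  right_inv t := by
    obtain ⟨⟨L, M, N⟩, h1, h2, h3, h4, h5⟩ := t
    have hg : 0 < Nat.gcd L (Nat.gcd M N) := Nat.gcd_pos_of_pos_left _ h1
    have hdL : Nat.gcd L (Nat.gcd M N) ∣ L := Nat.gcd_dvd_left _ _
    have hdMN : Nat.gcd L (Nat.gcd M N) ∣ Nat.gcd M N := Nat.gcd_dvd_right _ _
    have hdM : Nat.gcd L (Nat.gcd M N) ∣ M := hdMN.trans (Nat.gcd_dvd_left _ _)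
    have hdN : Nat.gcd L (Nat.gcd M N) ∣ N := hdMN.trans (Nat.gcd_dvd_right _ _)
    simp only [Subtype.mk.injEq, Prod.mk.injEq]
    have hsucc : Nat.gcd L (Nat.gcd M N) - 1 + 1 = Nat.gcd L (Nat.gcd M N) := by omega
    rw [hsucc]
    exact ⟨Nat.mul_div_cancel' hdL, Nat.mul_div_cancel' hdM, Nat.mul_div_cancel' hdN⟩

private lemma TEquiv2_eq (q : {p : ℕ × ℕ × ℕ // 0 < p.1 ∧ 0 < p.2.1 ∧ 0 < p.2.2 ∧
      p.1 ≤ p.2.2 ∧ p.2.1 ≤ p.2.2 ∧ Nat.gcd p.1 (Nat.gcd p.2.1 p.2.2) = 1} × ℕ) :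
    (TEquiv2 q).1 = ((q.2 + 1) * q.1.1.1, (q.2 + 1) * q.1.1.2.1, (q.2 + 1) * q.1.1.2.2) := rfl


private lemma hasSum_GAux {x y z : ℂ} (hx : ‖x‖ < 1) (hy : ‖y‖ < 1) (hz : ‖z‖ < 1)
    (hx1 : x ≠ 1) (hy1 : y ≠ 1) :
    HasSum (GfunAux x y z) (x * y / ((1-x) * (1-y)) *
      (Complex.log (1 - x*z) + Complex.log (1 - y*z)
        - Complex.log (1 - z) - Complex.log (1 - x*y*z))) := by
  have hs : Summable (GfunAux x y z) := (summable_norm_GAux hx hy hz).of_norm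
  rw [hs.hasSum_iff]
  rw [Summable.tsum_sigma' (fun n => Summable.of_finite) hs]
  have h1 : ∀ n : ℕ, ∑' (ij : Fin n × Fin n), GfunAux x y z ⟨n, ij⟩ =
      x * y / ((1-x) * (1-y)) * ((1 - x^n) * (1 - y^n) * (z^n / n)) := by
    intro n
    rw [tsum_fintype]
    exact innerSumAux3 hx1 hy1 n
  calc ∑' n : ℕ, ∑' (ij : Fin n × Fin n), GfunAux x y z ⟨n, ij⟩
      = ∑' n : ℕ, x * y / ((1-x) * (1-y)) * ((1 - x^n) * (1 - y^n) * (z^n / n)) := by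
        exact tsum_congr h1
    _ = _ := ((hasSum_F0 hx hy hz).mul_left _).tsum_eq


set_option maxHeartbeats 2000000 in
theorem stmt_10 (x y z : ℂ) (hx : ‖x‖ < 1) (hy : ‖y‖ < 1) (hz : ‖z‖ < 1)
    (hx1 : x ≠ 1) (hy1 : y ≠ 1) :
    (∏' p : {p : ℕ × ℕ × ℕ // 0 < p.1 ∧ 0 < p.2.1 ∧ 0 < p.2.2 ∧
        p.1 ≤ p.2.2 ∧ p.2.1 ≤ p.2.2 ∧ Nat.gcd p.1 (Nat.gcd p.2.1 p.2.2) = 1},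
      (1 / (1 - x ^ p.1.1 * y ^ p.1.2.1 * z ^ p.1.2.2)) ^ (1 / (p.1.2.2 : ℂ))) =
    ((1 - x * z) * (1 - y * z) / ((1 - z) * (1 - x * y * z))) ^
      (x * y / ((1 - x) * (1 - y))) := by
  set F0 : ℂ := Complex.log (1 - x*z) + Complex.log (1 - y*z)
      - Complex.log (1 - z) - Complex.log (1 - x*y*z) with hF0def
  set c : ℂ := x * y / ((1 - x) * (1 - y)) with hcdef
  set fT : {p : ℕ × ℕ × ℕ // 0 < p.1 ∧ 0 < p.2.1 ∧ 0 < p.2.2 ∧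
      p.1 ≤ p.2.2 ∧ p.2.1 ≤ p.2.2} → ℂ :=
    fun t => x ^ t.1.1 * y ^ t.1.2.1 * (z ^ t.1.2.2 / (t.1.2.2 : ℂ)) with hfTdef
  -- total sum over all triples
  have hT : HasSum fT (c * F0) := by
    rw [← Equiv.hasSum_iff TEquiv1]
    have : fT ∘ TEquiv1 = GfunAux x y z := by
      funext s
      exact rfl
    rw [this]
    exact hasSum_GAux hx hy hz hx1 hy1
  have hT2 : HasSum (fT ∘ TEquiv2) (c * F0) := (Equiv.hasSum_iff TEquiv2).mpr hT
  -- fiberwise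
  have hwlt : ∀ p : {p : ℕ × ℕ × ℕ // 0 < p.1 ∧ 0 < p.2.1 ∧ 0 < p.2.2 ∧
      p.1 ≤ p.2.2 ∧ p.2.1 ≤ p.2.2 ∧ Nat.gcd p.1 (Nat.gcd p.2.1 p.2.2) = 1},
      ‖x ^ p.1.1 * y ^ p.1.2.1 * z ^ p.1.2.2‖ < 1 := by
    intro p
    obtain ⟨h1, h2, h3, h4, h5, h6⟩ := p.2
    set l := p.1.1
    set m := p.1.2.1
    set n := p.1.2.2
    simp only [norm_mul, norm_pow]
    have hxl : ‖x‖ ^ l ≤ 1 := pow_le_one₀ (norm_nonneg x) hx.le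
    have hym : ‖y‖ ^ m ≤ 1 := pow_le_one₀ (norm_nonneg y) hy.le
    have hzn : ‖z‖ ^ n < 1 := pow_lt_one₀ (norm_nonneg z) hz h3.ne'
    calc ‖x‖ ^ l * ‖y‖ ^ m * ‖z‖ ^ n ≤ 1 * 1 * ‖z‖ ^ n := by
          apply mul_le_mul (mul_le_mul hxl hym (by positivity) zero_le_one) le_rfl
            (by positivity) (by norm_num)
      _ = ‖z‖ ^ n := by ring
      _ < 1 := hzn
  have hfiber : ∀ p : {p : ℕ × ℕ × ℕ // 0 < p.1 ∧ 0 < p.2.1 ∧ 0 < p.2.2 ∧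
      p.1 ≤ p.2.2 ∧ p.2.1 ≤ p.2.2 ∧ Nat.gcd p.1 (Nat.gcd p.2.1 p.2.2) = 1},
      HasSum (fun k : ℕ => (fT ∘ TEquiv2) (p, k))
        (-Complex.log (1 - x ^ p.1.1 * y ^ p.1.2.1 * z ^ p.1.2.2) / (p.1.2.2 : ℂ)) := by
    intro p
    set w : ℂ := x ^ p.1.1 * y ^ p.1.2.1 * z ^ p.1.2.2 with hwdef
    have hw1 : ‖w‖ < 1 := hwlt p
    have hbase := (hasSum_taylorSeries_neg_log hw1).div_const (p.1.2.2 : ℂ)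
    have hshift : HasSum (fun k : ℕ => w ^ (k+1) / ((k+1 : ℕ) : ℂ) / (p.1.2.2 : ℂ))
        (-Complex.log (1 - w) / (p.1.2.2 : ℂ)) := by
      have h0 : HasSum (fun k : ℕ => w ^ k / (k : ℂ) / (p.1.2.2 : ℂ))
          (-Complex.log (1 - w) / (p.1.2.2 : ℂ) + ∑ i ∈ Finset.range 1,
            w ^ i / (i : ℂ) / (p.1.2.2 : ℂ)) := by
        simpa using hbase
      exact (hasSum_nat_add_iff 1).mpr h0
    apply hshift.congr_fun
    intro k
    simp only [Function.comp_apply, hfTdef]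
    rw [TEquiv2_eq (p, k)]
    simp only
    rw [pow_mul', pow_mul', pow_mul', Nat.cast_mul, ← div_div]
    push_cast
    rw [hwdef]
    rw [mul_pow, mul_pow]
    ring
  have hg : HasSum (fun p : {p : ℕ × ℕ × ℕ // 0 < p.1 ∧ 0 < p.2.1 ∧ 0 < p.2.2 ∧
      p.1 ≤ p.2.2 ∧ p.2.1 ≤ p.2.2 ∧ Nat.gcd p.1 (Nat.gcd p.2.1 p.2.2) = 1} =>
      -Complex.log (1 - x ^ p.1.1 * y ^ p.1.2.1 * z ^ p.1.2.2) / (p.1.2.2 : ℂ)) (c * F0) :=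
    hT2.prod_fiberwise hfiber
  have hprod := hg.cexp
  have hfac : (fun p : {p : ℕ × ℕ × ℕ // 0 < p.1 ∧ 0 < p.2.1 ∧ 0 < p.2.2 ∧
      p.1 ≤ p.2.2 ∧ p.2.1 ≤ p.2.2 ∧ Nat.gcd p.1 (Nat.gcd p.2.1 p.2.2) = 1} =>
      (1 / (1 - x ^ p.1.1 * y ^ p.1.2.1 * z ^ p.1.2.2)) ^ (1 / (p.1.2.2 : ℂ))) =
      (fun p => Complex.exp
        (-Complex.log (1 - x ^ p.1.1 * y ^ p.1.2.1 * z ^ p.1.2.2) / (p.1.2.2 : ℂ))) := by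
    funext p
    set w : ℂ := x ^ p.1.1 * y ^ p.1.2.1 * z ^ p.1.2.2 with hwdef
    have hw1 : ‖w‖ < 1 := hwlt p
    have hne : (1 : ℂ) - w ≠ 0 := one_sub_ne_zero' hw1
    have harg : (1 - w).arg ≠ π := by
      intro hpi
      have h2 := Complex.abs_arg_lt_pi_div_two_iff.mpr (Or.inl (one_sub_re_pos hw1))
      rw [hpi, abs_of_pos Real.pi_pos] at h2
      linarith [Real.pi_pos]
    rw [Complex.cpow_def_of_ne_zero (one_div_ne_zero hne)]
    congr 1
    rw [one_div (1 - w), Complex.log_inv _ harg]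
    ring
  rw [hfac]
  have htp := hprod.tprod_eq
  simp only [Function.comp_apply] at htp
  rw [htp]
  -- right-hand side
  have hbase_ne : (1 - x * z) * (1 - y * z) / ((1 - z) * (1 - x * y * z)) ≠ 0 := by
    apply div_ne_zero
    · exact mul_ne_zero (one_sub_ne_zero' (norm_mul_lt_one hx hz))
        (one_sub_ne_zero' (norm_mul_lt_one hy hz))
    · exact mul_ne_zero (one_sub_ne_zero' hz)
        (one_sub_ne_zero' (norm_mul_lt_one (norm_mul_lt_one hx hy) hz))
  rw [Complex.cpow_def_of_ne_zero hbase_ne, log_base hx hy hz]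
  exact congrArg _ (mul_comm c F0)
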